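/- Let n, n_0, r, k, t, s be positive integers such that n ≥ n_0 ≥ k ≥ max(s, t+1) and r ≥ 2. Then for any r-coloring c_0 of the edges of K^k_{n_0}, there is an r-coloring c of the edges of K^k_n such that M(n,r,k,t,s;c) ≤ Σ_{ℓ=1}^{s} ⌈n/(n_0−k+1)⌉^s · C(s−1, ℓ−1) · M(n_0,r,k,t,ℓ;c_0). -/

import Mathlib

open Finset

/-- The `s`-shadow of a hypergraph `H`: all `s`-element vertex sets contained in
some edge of `H`. -/
def hShadow {V : Type*} [DecidableEq V] (s : ℕ) (H : Finset (Finset V)) :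
    Finset (Finset V) :=
  H.biUnion fun e => e.powersetCard s

/-- One step of `t`-tight connectivity: both `a` and `b` are edges of `H` and they
share at least `t` vertices. -/
def TightStep {V : Type*} [DecidableEq V] (t : ℕ) (H : Finset (Finset V))
    (a b : Finset V) : Prop :=
  a ∈ H ∧ b ∈ H ∧ t ≤ (a ∩ b).card

/-- Two edges lie in the same `t`-tight component iff they are joined by a chain of
edges, consecutive ones sharing at least `t` vertices. -/
def TightConn {V : Type*} [DecidableEq V] (t : ℕ) (H : Finset (Finset V)) :
    Finset V → Finset V → Prop :=
  Relation.ReflTransGen (TightStep t H)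

open scoped Classical in
/-- The `t`-tight component of the edge `e` in the hypergraph `H`. -/
noncomputable def tightComponent {V : Type*} [DecidableEq V] (t : ℕ)
    (H : Finset (Finset V)) (e : Finset V) : Finset (Finset V) :=
  H.filter fun f => TightConn t H e f

/-- The `k`-uniform hypergraph `H i` of edges of `K^k_n` having color `i` under the
coloring `c`. -/
def colorClass (n r k : ℕ) (c : Finset (Fin n) → Fin r) (i : Fin r) :
    Finset (Finset (Fin n)) :=
  (Finset.univ.powersetCard k).filter fun e => c e = i

/-- `M(n,r,k,t,s;c)`: the largest number of vertex `s`-sets contained in the edges of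
a monochromatic `t`-tight component of the `r`-coloring `c` of `K^k_n`. -/
noncomputable def Mcol (n r k t s : ℕ) (c : Finset (Fin n) → Fin r) : ℕ :=
  Finset.univ.sup fun i : Fin r =>
    (colorClass n r k c i).sup fun e =>
      (hShadow s (tightComponent t (colorClass n r k c i) e)).card

/-- `M(n,r,k,t,s)`: the minimum of `M(n,r,k,t,s;c)` over all `r`-colorings `c` of
`K^k_n`. -/
noncomputable def Mmin (n r k t s : ℕ) : ℕ :=
  sInf {m | ∃ c : Finset (Fin n) → Fin r, Mcol n r k t s c = m}


/-- Two monotone sequences on `[0,s)` with the same image and the same break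
positions are equal. -/
lemma blowup_mono_eq_of_breaks (g g' : ℕ → ℕ) (s : ℕ)
    (hg : ∀ a b, a ≤ b → b < s → g a ≤ g b)
    (hg' : ∀ a b, a ≤ b → b < s → g' a ≤ g' b)
    (him : (range s).image g = (range s).image g')
    (hbr : ∀ j, j + 1 < s → (g j = g (j+1) ↔ g' j = g' (j+1))) :
    ∀ j, j < s → g j = g' j := by
  intro j
  induction j with
  | zero =>
    intro h0
    -- g 0 is in image g' and vice versa
    have h1 : g 0 ∈ (range s).image g' := by
      rw [← him]; exact mem_image_of_mem g (mem_range.2 h0)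
    have h2 : g' 0 ∈ (range s).image g := by
      rw [him]; exact mem_image_of_mem g' (mem_range.2 h0)
    obtain ⟨m, hm, hme⟩ := mem_image.1 h1
    obtain ⟨m', hm', hme'⟩ := mem_image.1 h2
    have := hg' 0 m (Nat.zero_le _) (mem_range.1 hm)
    have := hg 0 m' (Nat.zero_le _) (mem_range.1 hm')
    omega
  | succ j ih =>
    intro hj1
    have hjs : j < s := by omega
    have hij := ih hjs
    by_cases hb : g j = g (j+1)
    · have hb' : g' j = g' (j+1) := (hbr j hj1).1 hb
      omega
    · have hb' : ¬ g' j = g' (j+1) := fun h => hb ((hbr j hj1).2 h)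
      have hlt : g j < g (j+1) := lt_of_le_of_ne (hg j (j+1) (Nat.le_succ _) hj1) hb
      have hlt' : g' j < g' (j+1) := lt_of_le_of_ne (hg' j (j+1) (Nat.le_succ _) hj1) hb'
      -- g (j+1) ∈ image g', realized at some index m; m must be > j
      have h1 : g (j+1) ∈ (range s).image g' := by
        rw [← him]; exact mem_image_of_mem g (mem_range.2 hj1)
      obtain ⟨m, hm, hme⟩ := mem_image.1 h1
      have hms := mem_range.1 hm
      have hmj : j + 1 ≤ m := by
        by_contra hc
        have : g' m ≤ g' j := hg' m j (by omega) hjs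
        omega
      have h3 : g' (j+1) ≤ g (j+1) := by
        have := hg' (j+1) m hmj hms
        omega
      have h2 : g' (j+1) ∈ (range s).image g := by
        rw [him]; exact mem_image_of_mem g' (mem_range.2 hj1)
      obtain ⟨m', hm', hme'⟩ := mem_image.1 h2
      have hms' := mem_range.1 hm'
      have hmj' : j + 1 ≤ m' := by
        by_contra hc
        have : g m' ≤ g j := hg m' j (by omega) hjs
        omega
      have h4 : g (j+1) ≤ g' (j+1) := by
        have := hg (j+1) m' hmj' hms'
        omega
      omega

open Finset

lemma blowup_breaks_card (g : ℕ → ℕ) (s : ℕ) (hs : 0 < s)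
    (hg : ∀ a b, a ≤ b → b < s → g a ≤ g b) :
    ((range (s-1)).filter fun j => ¬ g j = g (j+1)).card + 1
      = ((range s).image g).card := by
  classical
  set B := (range (s-1)).filter (fun j => ¬ g j = g (j+1)) with hB
  set D := (range s).filter (fun j => j = s - 1 ∨ ¬ g j = g (j+1)) with hD
  have hDins : D = insert (s-1) B := by
    ext j
    simp only [hD, hB, mem_insert, mem_filter, mem_range]
    constructor
    · rintro ⟨hj, h | h⟩
      · exact Or.inl h
      · by_cases hj' : j = s - 1
        · exact Or.inl hj'
        · exact Or.inr ⟨by omega, h⟩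
    · rintro (h | ⟨hj, h⟩)
      · exact ⟨by omega, Or.inl h⟩
      · exact ⟨by omega, Or.inr h⟩
  have hnotmem : s - 1 ∉ B := by
    simp [hB]
  have hDcard : D.card = B.card + 1 := by
    rw [hDins, card_insert_of_notMem hnotmem]
  have hinj : Set.InjOn g D := by
    intro j hj j' hj' hgeq
    simp only [Finset.mem_coe, hD, mem_filter, mem_range] at hj hj'
    rcases lt_trichotomy j j' with h | h | h
    · exfalso
      have hjne : ¬ j = s - 1 := by omega
      have hbrk : ¬ g j = g (j+1) := hj.2.resolve_left hjne
      have h1 : g j ≤ g (j+1) := hg j (j+1) (Nat.le_succ _) (by omega)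
      have h2 : g (j+1) ≤ g j' := hg (j+1) j' (by omega) hj'.1
      omega
    · exact h
    · exfalso
      have hjne : ¬ j' = s - 1 := by omega
      have hbrk : ¬ g j' = g (j'+1) := hj'.2.resolve_left hjne
      have h1 : g j' ≤ g (j'+1) := hg j' (j'+1) (Nat.le_succ _) (by omega)
      have h2 : g (j'+1) ≤ g j := hg (j'+1) j (by omega) hj.1
      omega
  have himg : D.image g = (range s).image g := by
    apply Subset.antisymm
    · exact image_subset_image (filter_subset _ _)
    · intro v hv
      obtain ⟨m, hm, hme⟩ := mem_image.1 hv
      have hms := mem_range.1 hm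
      set F := (range s).filter (fun j => g j = g m) with hF
      have hFne : F.Nonempty := ⟨m, by simp [hF, hms]⟩
      set j := F.max' hFne with hj
      have hjF : j ∈ F := F.max'_mem hFne
      simp only [hF, mem_filter, mem_range] at hjF
      have hjD : j ∈ D := by
        simp only [hD, mem_filter, mem_range]
        refine ⟨hjF.1, ?_⟩
        by_cases hc : j = s - 1
        · exact Or.inl hc
        · refine Or.inr (fun heq => ?_)
          have hj1 : j + 1 ∈ F := by
            simp only [hF, mem_filter, mem_range]
            exact ⟨by omega, by omega⟩
          have := F.le_max' (j+1) hj1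
          omega
      exact mem_image.2 ⟨j, hjD, by rw [hjF.2, hme]⟩
  have := Finset.card_image_of_injOn hinj
  rw [himg] at this
  omega
open Finset

/-- The increasing enumeration (of values) of a finset of `Fin n`. -/
def blowSeq {n : ℕ} (S : Finset (Fin n)) : ℕ → ℕ :=
  fun j => ((S.sort (· ≤ ·)).map Fin.val).getD j 0

lemma blowSeq_strictMono {n : ℕ} (S : Finset (Fin n)) :
    ∀ a b, a < b → b < S.card → blowSeq S a < blowSeq S b := by
  intro a b hab hb
  have hlen : ((S.sort (· ≤ ·)).map Fin.val).length = S.card := by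
    rw [List.length_map, Finset.length_sort]
  have hsorted : ((S.sort (· ≤ ·)).map Fin.val).Pairwise (· < ·) := by
    refine List.Pairwise.map _ (fun u v huv => ?_) (Finset.sortedLT_sort S).pairwise
    exact huv
  rw [List.pairwise_iff_getElem] at hsorted
  have ha : a < ((S.sort (· ≤ ·)).map Fin.val).length := by omega
  have hb' : b < ((S.sort (· ≤ ·)).map Fin.val).length := by omega
  have := hsorted a b ha hb' hab
  simp only [blowSeq]
  rw [List.getD_eq_getElem _ _ ha, List.getD_eq_getElem _ _ hb']
  exact this

lemma blowSeq_mono {n : ℕ} (S : Finset (Fin n)) :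
    ∀ a b, a ≤ b → b < S.card → blowSeq S a ≤ blowSeq S b := by
  intro a b hab hb
  rcases eq_or_lt_of_le hab with h | h
  · rw [h]
  · exact le_of_lt (blowSeq_strictMono S a b h hb)

lemma blowSeq_image {n : ℕ} (S : Finset (Fin n)) :
    (range S.card).image (blowSeq S) = S.image Fin.val := by
  have hlen : ((S.sort (· ≤ ·)).map Fin.val).length = S.card := by
    rw [List.length_map, Finset.length_sort]
  ext v
  simp only [mem_image, mem_range]
  constructor
  · rintro ⟨j, hj, rfl⟩
    have hj' : j < ((S.sort (· ≤ ·)).map Fin.val).length := by omega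
    have : blowSeq S j ∈ (S.sort (· ≤ ·)).map Fin.val := by
      simp only [blowSeq]
      rw [List.getD_eq_getElem _ _ hj']
      exact List.getElem_mem hj'
    obtain ⟨u, hu, hue⟩ := List.mem_map.1 this
    exact ⟨u, Finset.mem_sort _ |>.1 hu, hue⟩
  · rintro ⟨u, hu, rfl⟩
    have : (u : ℕ) ∈ (S.sort (· ≤ ·)).map Fin.val :=
      List.mem_map.2 ⟨u, (Finset.mem_sort _).2 hu, rfl⟩
    obtain ⟨j, hj, hje⟩ := List.mem_iff_getElem.1 this
    exact ⟨j, by omega, by simp only [blowSeq]; rw [List.getD_eq_getElem _ _ hj]; exact hje⟩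

/-- A finset of `Fin n` is determined by its size and increasing enumeration. -/
lemma blowSeq_inj {n : ℕ} (S S' : Finset (Fin n)) (hcard : S.card = S'.card)
    (h : ∀ j < S.card, blowSeq S j = blowSeq S' j) : S = S' := by
  have key : ∀ v : Fin n, v ∈ S ↔ v ∈ S' := by
    intro v
    have h1 : v ∈ S ↔ (v : ℕ) ∈ S.image Fin.val := by
      simp only [mem_image]
      exact ⟨fun hv => ⟨v, hv, rfl⟩, fun ⟨u, hu, hue⟩ => by
        rwa [← Fin.val_injective hue]⟩
    have h2 : v ∈ S' ↔ (v : ℕ) ∈ S'.image Fin.val := by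
      simp only [mem_image]
      exact ⟨fun hv => ⟨v, hv, rfl⟩, fun ⟨u, hu, hue⟩ => by
        rwa [← Fin.val_injective hue]⟩
    rw [h1, h2, ← blowSeq_image, ← blowSeq_image, ← hcard]
    constructor
    · rintro hm
      obtain ⟨j, hj, hje⟩ := mem_image.1 hm
      exact mem_image.2 ⟨j, hj, by rw [← h j (mem_range.1 hj)]; exact hje⟩
    · rintro hm
      obtain ⟨j, hj, hje⟩ := mem_image.1 hm
      exact mem_image.2 ⟨j, hj, by rw [h j (mem_range.1 hj)]; exact hje⟩
  exact Finset.ext key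
open Finset

lemma blowup_fiber_bound (n q s ℓ : ℕ) (hq : 0 < q) (hs : 0 < s)
    (hl : 0 < ℓ) (T : Finset ℕ) (hT : T.card = ℓ) :
    (((univ : Finset (Fin n)).powersetCard s).filter
        (fun S => S.image (fun x : Fin n => (x : ℕ) / q) = T)).card
      ≤ q ^ s * (s-1).choose (ℓ-1) := by
  classical
  have htarget : ((univ : Finset (Fin s → Fin q)) ×ˢ
      ((range (s-1)).powersetCard (ℓ-1))).card = q ^ s * (s-1).choose (ℓ-1) := by
    rw [card_product, card_univ, card_powersetCard, card_range]
    congr 1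
    rw [Fintype.card_fun, Fintype.card_fin, Fintype.card_fin]
  rw [← htarget]
  apply card_le_card_of_injOn
    (fun S => ((fun i : Fin s => (⟨blowSeq S i % q, Nat.mod_lt _ hq⟩ : Fin q)),
      (range (s-1)).filter (fun j => ¬ blowSeq S j / q = blowSeq S (j+1) / q)))
  · -- maps to
    intro S hS
    dsimp only
    simp only [Finset.mem_coe, mem_filter, Finset.mem_powersetCard] at hS
    obtain ⟨⟨-, hScard⟩, himg⟩ := hS
    refine mem_product.2 ⟨mem_univ _, ?_⟩
    dsimp only
    rw [Finset.mem_powersetCard]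
    refine ⟨filter_subset _ _, ?_⟩
    have hmono : ∀ a b, a ≤ b → b < s → blowSeq S a / q ≤ blowSeq S b / q := by
      intro a b hab hb
      exact Nat.div_le_div_right (blowSeq_mono S a b hab (by omega))
    have hbc := blowup_breaks_card (fun j => blowSeq S j / q) s hs hmono
    have himg2 : (range s).image (fun j => blowSeq S j / q) = T := by
      rw [← himg]
      have h1 : (range s).image (fun j => blowSeq S j / q)
          = ((range s).image (blowSeq S)).image (· / q) := by
        rw [Finset.image_image]; rfl
      rw [h1, ← hScard, blowSeq_image, Finset.image_image]
      rfl
    rw [himg2, hT] at hbc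
    omega
  · -- injective on the fiber
    intro S hS S' hS' henc
    simp only [Finset.mem_coe, mem_filter, Finset.mem_powersetCard] at hS hS'
    obtain ⟨⟨-, hScard⟩, himg⟩ := hS
    obtain ⟨⟨-, hScard'⟩, himg'⟩ := hS'
    have hoff := congrArg Prod.fst henc
    have hbrk := congrArg Prod.snd henc
    simp only at hoff hbrk
    set g : ℕ → ℕ := fun j => blowSeq S j / q with hg
    set g' : ℕ → ℕ := fun j => blowSeq S' j / q with hg'
    have hmono : ∀ a b, a ≤ b → b < s → g a ≤ g b := fun a b hab hb =>
      Nat.div_le_div_right (blowSeq_mono S a b hab (by omega))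
    have hmono' : ∀ a b, a ≤ b → b < s → g' a ≤ g' b := fun a b hab hb =>
      Nat.div_le_div_right (blowSeq_mono S' a b hab (by omega))
    have himgeq : (range s).image g = (range s).image g' := by
      have h1 : (range s).image g = T := by
        rw [← himg, hg]
        have : (range s).image (fun j => blowSeq S j / q)
            = ((range s).image (blowSeq S)).image (· / q) := by
          rw [Finset.image_image]; rfl
        rw [this, ← hScard, blowSeq_image, Finset.image_image]; rfl
      have h2 : (range s).image g' = T := by
        rw [← himg', hg']
        have : (range s).image (fun j => blowSeq S' j / q)
            = ((range s).image (blowSeq S')).image (· / q) := by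
          rw [Finset.image_image]; rfl
        rw [this, ← hScard', blowSeq_image, Finset.image_image]; rfl
      rw [h1, h2]
    have hbreq : ∀ j, j + 1 < s → (g j = g (j+1) ↔ g' j = g' (j+1)) := by
      intro j hj
      have hmem := Finset.ext_iff.1 hbrk j
      simp only [mem_filter, mem_range] at hmem
      constructor
      · intro h
        by_contra hc
        have := hmem.2 ⟨by omega, hc⟩
        exact this.2 h
      · intro h
        by_contra hc
        have := hmem.1 ⟨by omega, hc⟩
        exact this.2 h
    have hgeq := blowup_mono_eq_of_breaks g g' s hmono hmono' himgeq hbreq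
    have hyeq : ∀ j, j < s → blowSeq S j = blowSeq S' j := by
      intro j hj
      have h1 := congrFun hoff ⟨j, hj⟩
      have h2 : blowSeq S j % q = blowSeq S' j % q := by
        simpa [Fin.mk.injEq] using h1
      have h3 : blowSeq S j / q = blowSeq S' j / q := hgeq j hj
      rw [← Nat.div_add_mod (blowSeq S j) q, ← Nat.div_add_mod (blowSeq S' j) q, h2, h3]
    exact blowSeq_inj S S' (by omega) (fun j hj => hyeq j (by omega))


/-- The last `m` vertices of `Fin n₀`. -/
def blowTail (n₀ : ℕ) (h0 : 0 < n₀) (m : ℕ) : Finset (Fin n₀) :=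
  (range m).image (fun j => (⟨n₀ - 1 - j, by omega⟩ : Fin n₀))

lemma mem_blowTail (n₀ : ℕ) (h0 : 0 < n₀) (m : ℕ) (hm : m ≤ n₀) (v : Fin n₀) :
    v ∈ blowTail n₀ h0 m ↔ n₀ - m ≤ v.val := by
  constructor
  · intro hv
    obtain ⟨j, hj, rfl⟩ := mem_image.1 hv
    have := mem_range.1 hj
    simp only
    omega
  · intro hv
    refine mem_image.2 ⟨n₀ - 1 - v.val, mem_range.2 (by omega), ?_⟩
    apply Fin.ext
    simp only
    omega

lemma blowTail_card (n₀ : ℕ) (h0 : 0 < n₀) (m : ℕ) (hm : m ≤ n₀) :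
    (blowTail n₀ h0 m).card = m := by
  rw [blowTail, card_image_of_injOn, card_range]
  intro j hj j' hj' he
  have hj1 := mem_range.1 (Finset.mem_coe.1 hj)
  have hj2 := mem_range.1 (Finset.mem_coe.1 hj')
  have : n₀ - 1 - j = n₀ - 1 - j' := congrArg Fin.val he
  omega

lemma blowTail_mono (n₀ : ℕ) (h0 : 0 < n₀) (m m' : ℕ) (hmm : m ≤ m') :
    blowTail n₀ h0 m ⊆ blowTail n₀ h0 m' :=
  image_subset_image (by exact range_subset_range.2 hmm)

/-- Extend a finset of "low" vertices of `Fin n₀` by tail vertices to reach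
cardinality `k`. -/
def blowExt (n₀ k : ℕ) (h0 : 0 < n₀) (A : Finset (Fin n₀)) : Finset (Fin n₀) :=
  A ∪ blowTail n₀ h0 (k - A.card)

lemma subset_blowExt {n₀ k : ℕ} {h0 : 0 < n₀} {A : Finset (Fin n₀)} :
    A ⊆ blowExt n₀ k h0 A :=
  subset_union_left

lemma blowExt_card (n₀ k : ℕ) (h0 : 0 < n₀) (hk : k ≤ n₀) (A : Finset (Fin n₀))
    (hA : A.Nonempty) (hAk : A.card ≤ k) (hAv : ∀ v ∈ A, v.val + k ≤ n₀) :
    (blowExt n₀ k h0 A).card = k := by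
  have hA1 : 1 ≤ A.card := card_pos.2 hA
  have hdisj : Disjoint A (blowTail n₀ h0 (k - A.card)) := by
    rw [Finset.disjoint_left]
    intro v hv hv'
    have h1 := hAv v hv
    have h2 := (mem_blowTail n₀ h0 (k - A.card) (by omega) v).1 hv'
    omega
  rw [blowExt, card_union_of_disjoint hdisj,
    blowTail_card n₀ h0 (k - A.card) (by omega)]
  omega

lemma blowExt_inter (n₀ k t : ℕ) (h0 : 0 < n₀) (hk : k ≤ n₀)
    (A B : Finset (Fin n₀))
    (hAk : A.card ≤ k) (hBk : B.card ≤ k)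
    (hAv : ∀ v ∈ A, v.val + k ≤ n₀) (hBv : ∀ v ∈ B, v.val + k ≤ n₀)
    (hA : A.card + t ≤ (A ∩ B).card + k) (hB : B.card + t ≤ (A ∩ B).card + k) :
    t ≤ ((blowExt n₀ k h0 A) ∩ (blowExt n₀ k h0 B)).card := by
  classical
  set m0 := min (k - A.card) (k - B.card) with hm0
  have hsub : (A ∩ B) ∪ blowTail n₀ h0 m0 ⊆ blowExt n₀ k h0 A ∩ blowExt n₀ k h0 B := by
    apply union_subset
    · exact subset_inter
        ((inter_subset_left).trans subset_union_left)
        ((inter_subset_right).trans subset_union_left)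
    · exact subset_inter
        ((blowTail_mono n₀ h0 m0 (k - A.card) (by omega)).trans subset_union_right)
        ((blowTail_mono n₀ h0 m0 (k - B.card) (by omega)).trans subset_union_right)
  have hdisj : Disjoint (A ∩ B) (blowTail n₀ h0 m0) := by
    rw [Finset.disjoint_left]
    intro v hv hv'
    have hvA := mem_inter.1 hv |>.1
    have hA1 : 1 ≤ A.card := card_pos.2 ⟨v, hvA⟩
    have h1 := hAv v hvA
    have h2 := (mem_blowTail n₀ h0 m0 (by omega) v).1 hv'
    omega
  have hcard : ((A ∩ B) ∪ blowTail n₀ h0 m0).card = (A ∩ B).card + m0 := by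
    rw [card_union_of_disjoint hdisj, blowTail_card n₀ h0 m0 (by omega)]
  have := card_le_card hsub
  rw [hcard] at this
  omega

lemma mem_colorClass_iff {n r k : ℕ} {c : Finset (Fin n) → Fin r} {i : Fin r}
    {e : Finset (Fin n)} : e ∈ colorClass n r k c i ↔ e.card = k ∧ c e = i := by
  rw [colorClass, mem_filter, Finset.mem_powersetCard]
  exact ⟨fun h => ⟨h.1.2, h.2⟩, fun h => ⟨⟨subset_univ _, h.1⟩, h.2⟩⟩

/-- **Blow-up lemma.** Let `n ≥ n₀ ≥ k ≥ max s (t+1)` and `r ≥ 2`. Then for any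
`r`-coloring `c₀` of `K^k_{n₀}` there is an `r`-coloring `c` of `K^k_n` with
`M(n,r,k,t,s;c) ≤ Σ_{ℓ=1}^s ⌈n/(n₀-k+1)⌉^s C(s-1,ℓ-1) M(n₀,r,k,t,ℓ;c₀)`. -/
theorem statement14 (n n₀ r k t s : ℕ) (hr : 2 ≤ r) (ht : 0 < t) (hs : 0 < s)
    (hmax : max s (t + 1) ≤ k) (hkn : k ≤ n₀) (hn : n₀ ≤ n)
    (c₀ : Finset (Fin n₀) → Fin r) :
    ∃ c : Finset (Fin n) → Fin r,
      Mcol n r k t s c ≤ ∑ ℓ ∈ Finset.Icc 1 s,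
        ((n + (n₀ - k + 1) - 1) / (n₀ - k + 1)) ^ s * (s - 1).choose (ℓ - 1) *
          Mcol n₀ r k t ℓ c₀ := by
  classical
  have hs_k : s ≤ k := le_trans (le_max_left _ _) hmax
  have ht_k : t + 1 ≤ k := le_trans (le_max_right _ _) hmax
  have hk2 : 2 ≤ k := by omega
  have h0 : 0 < n₀ := by omega
  set d := n₀ - k + 1 with hdd
  set q := (n + d - 1) / d with hqq
  have hd : 0 < d := by omega
  have hn1 : 1 ≤ n := by omega
  have hq' : q = (n - 1) / d + 1 := by
    rw [hqq, show n + d - 1 = (n - 1) + d by omega, Nat.add_div_right _ hd]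
  have hq : 0 < q := by rw [hq']; exact Nat.succ_pos _
  have hnqd : n ≤ q * d := by
    by_contra hc
    have h1 : q * d ≤ n - 1 := by omega
    have h2 : q ≤ (n - 1) / d := (Nat.le_div_iff_mul_le hd).2 h1
    omega
  -- the projection map
  have hφbound : ∀ x : Fin n, x.val / q < d := by
    intro x
    rw [Nat.div_lt_iff_lt_mul hq]
    exact lt_of_lt_of_le x.isLt (by rw [Nat.mul_comm] at hnqd; exact hnqd)
  set φ : Fin n → Fin n₀ := fun x => ⟨x.val / q, by have := hφbound x; omega⟩
    with hφ
  have hφval : ∀ x : Fin n, (φ x).val + k ≤ n₀ := by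
    intro x
    have := hφbound x
    simp only [hφ]
    omega
  -- the blow-down of an edge
  set Φ : Finset (Fin n) → Finset (Fin n₀) :=
    fun e => blowExt n₀ k h0 (e.image φ) with hΦ
  set c : Finset (Fin n) → Fin r := fun e => c₀ (Φ e) with hc
  refine ⟨c, ?_⟩
  -- basic facts about images of edges
  have himgv : ∀ e : Finset (Fin n), ∀ v ∈ e.image φ, v.val + k ≤ n₀ := by
    intro e v hv
    obtain ⟨x, hx, rfl⟩ := mem_image.1 hv
    exact hφval x
  have hΦcard : ∀ e : Finset (Fin n), e.card = k → (Φ e).card = k := by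
    intro e he
    refine blowExt_card n₀ k h0 hkn _ ?_ ?_ (himgv e)
    · exact (Finset.nonempty_of_ne_empty (by intro hh; rw [hh] at he; simp at he; omega)).image φ
    · exact le_trans (card_image_le) (le_of_eq he)
  have hΦmem : ∀ i : Fin r, ∀ a : Finset (Fin n), a ∈ colorClass n r k c i →
      Φ a ∈ colorClass n₀ r k c₀ i := by
    intro i a ha
    obtain ⟨hacard, hacol⟩ := mem_colorClass_iff.1 ha
    exact mem_colorClass_iff.2 ⟨hΦcard a hacard, hacol⟩
  -- the step homomorphism
  have hstep : ∀ i : Fin r, ∀ a b : Finset (Fin n),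
      TightStep t (colorClass n r k c i) a b →
      TightStep t (colorClass n₀ r k c₀ i) (Φ a) (Φ b) := by
    intro i a b hab
    obtain ⟨haH, hbH, hcap⟩ := hab
    refine ⟨hΦmem i a haH, hΦmem i b hbH, ?_⟩
    have hacard := (mem_colorClass_iff.1 haH).1
    have hbcard := (mem_colorClass_iff.1 hbH).1
    -- intersection bound in the base
    have key : ∀ x y : Finset (Fin n), x.card = k → y.card = k →
        t ≤ (x ∩ y).card →
        (x.image φ).card + t ≤ ((x.image φ) ∩ (y.image φ)).card + k := by
      intro x y hx hy hxy
      have h1 : x.image φ ⊆ ((x ∩ y).image φ) ∪ ((x \ y).image φ) := by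
        intro v hv
        obtain ⟨u, hu, rfl⟩ := mem_image.1 hv
        by_cases huy : u ∈ y
        · exact mem_union_left _ (mem_image_of_mem φ (mem_inter.2 ⟨hu, huy⟩))
        · exact mem_union_right _ (mem_image_of_mem φ (mem_sdiff.2 ⟨hu, huy⟩))
      have h2 : (x.image φ).card ≤ ((x ∩ y).image φ).card + ((x \ y).image φ).card :=
        le_trans (card_le_card h1) (card_union_le _ _)
      have h3 : ((x ∩ y).image φ).card ≤ ((x.image φ) ∩ (y.image φ)).card :=
        card_le_card (image_inter_subset φ x y)
      have h4 : ((x \ y).image φ).card ≤ (x \ y).card := card_image_le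
      have h5 := card_inter_add_card_sdiff x y
      omega
    have hAt := key a b hacard hbcard hcap
    have hBt : (b.image φ).card + t ≤ ((a.image φ) ∩ (b.image φ)).card + k := by
      have := key b a hbcard hacard (by rwa [inter_comm b a])
      rwa [inter_comm (b.image φ)] at this
    exact blowExt_inter n₀ k t h0 hkn _ _
      (le_trans card_image_le (le_of_eq hacard))
      (le_trans card_image_le (le_of_eq hbcard))
      (himgv a) (himgv b) hAt hBt
  -- now bound the shadow of every monochromatic component
  rw [Mcol]
  apply Finset.sup_le
  intro i _
  apply Finset.sup_le
  intro e₀ he₀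
  set H := colorClass n r k c i with hH
  set H' := colorClass n₀ r k c₀ i with hH'
  set Cup := tightComponent t H e₀ with hCup
  set Cdown := tightComponent t H' (Φ e₀) with hCdown
  have hΦe₀ : Φ e₀ ∈ H' := hΦmem i e₀ he₀
  have hcomp : ∀ f ∈ Cup, Φ f ∈ Cdown := by
    intro f hf
    rw [hCup, tightComponent, mem_filter] at hf
    rw [hCdown, tightComponent, mem_filter]
    exact ⟨hΦmem i f hf.1,
      Relation.ReflTransGen.lift Φ (fun a b hab => hstep i a b hab) _ _ hf.2⟩
  set Sh := hShadow s Cup with hSh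
  have hShcard : ∀ S ∈ Sh, S.card = s := by
    intro S hS
    obtain ⟨f, hf, hSf⟩ := mem_biUnion.1 hS
    exact (Finset.mem_powersetCard.1 hSf).2
  calc Sh.card
      ≤ ((Icc 1 s).biUnion fun ℓ => Sh.filter fun S => (S.image φ).card = ℓ).card := by
        apply card_le_card
        intro S hS
        have hcard := hShcard S hS
        have hne : S.Nonempty := by
          rw [← card_pos, hcard]; exact hs
        refine mem_biUnion.2 ⟨(S.image φ).card, mem_Icc.2 ⟨?_, ?_⟩, mem_filter.2 ⟨hS, rfl⟩⟩
        · exact card_pos.2 (hne.image φ)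
        · exact le_trans card_image_le (le_of_eq hcard)
    _ ≤ ∑ ℓ ∈ Icc 1 s, (Sh.filter fun S => (S.image φ).card = ℓ).card :=
        card_biUnion_le
    _ ≤ ∑ ℓ ∈ Finset.Icc 1 s,
        q ^ s * (s - 1).choose (ℓ - 1) * Mcol n₀ r k t ℓ c₀ := by
        apply sum_le_sum
        intro ℓ hℓ
        obtain ⟨hℓ1, hℓs⟩ := mem_Icc.1 hℓ
        have h1 : (Sh.filter fun S => (S.image φ).card = ℓ).card
            ≤ (q ^ s * (s - 1).choose (ℓ - 1)) * (hShadow ℓ Cdown).card := by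
          apply card_le_mul_card_image_of_maps_to (f := fun S => S.image φ)
          · intro S hSm
            obtain ⟨hSSh, hSl⟩ := mem_filter.1 hSm
            obtain ⟨f, hf, hSf⟩ := mem_biUnion.1 hSSh
            obtain ⟨hSfsub, hScard⟩ := Finset.mem_powersetCard.1 hSf
            refine mem_biUnion.2 ⟨Φ f, hcomp f hf, Finset.mem_powersetCard.2 ⟨?_, hSl⟩⟩
            exact (image_subset_image hSfsub).trans subset_blowExt
          · intro T hT
            obtain ⟨g, hg, hTg⟩ := mem_biUnion.1 hT
            have hTcard : T.card = ℓ := (Finset.mem_powersetCard.1 hTg).2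
            have hsubfib : (((Sh.filter fun S => (S.image φ).card = ℓ)).filter
                  fun S => S.image φ = T) ⊆
                ((univ : Finset (Fin n)).powersetCard s).filter
                  (fun S => S.image (fun x : Fin n => (x : ℕ) / q) = T.image Fin.val) := by
              intro S hSm
              obtain ⟨hSm1, hST⟩ := mem_filter.1 hSm
              have hScard := hShcard S (mem_filter.1 hSm1).1
              refine mem_filter.2 ⟨Finset.mem_powersetCard.2 ⟨subset_univ _, hScard⟩, ?_⟩
              have himim : S.image (fun x : Fin n => (x : ℕ) / q)
                  = (S.image φ).image Fin.val := by
                rw [Finset.image_image]; rfl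
              rw [himim, hST]
            refine le_trans (card_le_card hsubfib) ?_
            exact blowup_fiber_bound n q s ℓ hq hs (by omega) (T.image Fin.val)
              (by rw [Finset.card_image_of_injective _ Fin.val_injective, hTcard])
        have h2 : (hShadow ℓ Cdown).card ≤ Mcol n₀ r k t ℓ c₀ := by
          refine le_trans ?_ (Finset.le_sup (f := fun i : Fin r =>
            (colorClass n₀ r k c₀ i).sup fun e =>
              (hShadow ℓ (tightComponent t (colorClass n₀ r k c₀ i) e)).card)
            (mem_univ i))
          exact Finset.le_sup (f := fun e =>
            (hShadow ℓ (tightComponent t (colorClass n₀ r k c₀ i) e)).card) hΦe₀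
        exact le_trans h1 (Nat.mul_le_mul_left _ h2)
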